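/- Let $M_B > 0$ and $r_0 > 0$, and define $f(\lambda) = \frac{M_B - \lambda}{\lambda^2 r_0 + \lambda}$ for $\lambda \in (0, M_B]$. Then $f$ is convex on $(0, M_B]$. -/

import Mathlib

theorem stmt_7 (MB r0 : ℝ) (hMB : 0 < MB) (hr0 : 0 < r0) :
    ConvexOn ℝ (Set.Ioc (0 : ℝ) MB)
      (fun lam : ℝ => (MB - lam) / (lam ^ 2 * r0 + lam)) := by
  set g : ℝ → ℝ := fun lam => (MB - lam) / (lam ^ 2 * r0 + lam) with hg
  set g1 : ℝ → ℝ := fun x => (r0 * x ^ 2 - 2 * MB * r0 * x - MB) / (x ^ 2 * r0 + x) ^ 2 with hg1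
  have hd : ∀ x : ℝ, 0 < x → 0 < x ^ 2 * r0 + x := by
    intro x hx; positivity
  have hder : ∀ x : ℝ, 0 < x → HasDerivAt g (g1 x) x := by
    intro x hx
    have h1 : HasDerivAt (fun y : ℝ => MB - y) (-1) x := by
      simpa using (hasDerivAt_id x).const_sub MB
    have h2 : HasDerivAt (fun y : ℝ => y ^ 2 * r0 + y) (2 * x * r0 + 1) x := by
      have := ((hasDerivAt_pow 2 x).mul_const r0).add (hasDerivAt_id x)
      simpa [Pi.add_def] using this
    have h4 := h1.div h2 (hd x hx).ne'
    have heq : g1 x = (-1 * (x ^ 2 * r0 + x) - (MB - x) * (2 * x * r0 + 1)) / (x ^ 2 * r0 + x) ^ 2 := by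
      simp only [hg1]; ring
    rw [hg, heq]; exact h4
  have hder1 : ∀ x : ℝ, 0 < x → HasDerivAt g1
      (((2 * r0 * x - 2 * MB * r0) * (x ^ 2 * r0 + x) ^ 2 -
        (r0 * x ^ 2 - 2 * MB * r0 * x - MB) * (2 * (x ^ 2 * r0 + x) * (2 * x * r0 + 1))) /
        ((x ^ 2 * r0 + x) ^ 2) ^ 2) x := by
    intro x hx
    have h1 : HasDerivAt (fun y : ℝ => r0 * y ^ 2 - 2 * MB * r0 * y - MB)
        (2 * r0 * x - 2 * MB * r0) x := by
      have := (((hasDerivAt_pow 2 x).const_mul r0).sub ((hasDerivAt_id x).const_mul (2 * MB * r0))).sub_const MB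
      exact this.congr_deriv (by norm_num; ring)
    have h2 : HasDerivAt (fun y : ℝ => y ^ 2 * r0 + y) (2 * x * r0 + 1) x := by
      have := ((hasDerivAt_pow 2 x).mul_const r0).add (hasDerivAt_id x)
      simpa [Pi.add_def] using this
    have h3 : HasDerivAt (fun y : ℝ => (y ^ 2 * r0 + y) ^ 2)
        (2 * (x ^ 2 * r0 + x) * (2 * x * r0 + 1)) x := by
      have := h2.pow 2
      exact this.congr_deriv (by norm_num)
    have hne : ((x ^ 2 * r0 + x) ^ 2) ≠ 0 := by positivity
    exact h1.div h3 hne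
  have hIoo : ∀ x ∈ Set.Ioo (0 : ℝ) MB, 0 < x := fun x hx => hx.1
  have hderivg : ∀ x : ℝ, 0 < x → deriv g x = g1 x := fun x hx => (hder x hx).deriv
  have hEq : ∀ x : ℝ, 0 < x → deriv g =ᶠ[nhds x] g1 := by
    intro x hx
    filter_upwards [Ioi_mem_nhds hx] with y hy
    exact hderivg y hy
  apply convexOn_of_deriv2_nonneg (convex_Ioc 0 MB)
  · intro x hx
    exact (hder x hx.1).continuousAt.continuousWithinAt
  · rw [interior_Ioc]
    intro x hx
    exact (hder x hx.1).differentiableAt.differentiableWithinAt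
  · rw [interior_Ioc]
    intro x hx
    exact (((hder1 x hx.1).differentiableAt).congr_of_eventuallyEq
      (hEq x hx.1)).differentiableWithinAt
  · rw [interior_Ioc]
    intro x hx
    have hx0 := hx.1
    have hxMB := hx.2
    have h2 : deriv (deriv g) x = ((2 * r0 * x - 2 * MB * r0) * (x ^ 2 * r0 + x) ^ 2 -
        (r0 * x ^ 2 - 2 * MB * r0 * x - MB) * (2 * (x ^ 2 * r0 + x) * (2 * x * r0 + 1))) /
        ((x ^ 2 * r0 + x) ^ 2) ^ 2 := by
      rw [Filter.EventuallyEq.deriv_eq (hEq x hx0)]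
      exact (hder1 x hx0).deriv
    show (0:ℝ) ≤ deriv^[2] g x
    have h3 : deriv^[2] g x = deriv (deriv g) x := rfl
    rw [h3, h2]
    apply div_nonneg _ (by positivity)
    have key : (2 * r0 * x - 2 * MB * r0) * (x ^ 2 * r0 + x) ^ 2 -
        (r0 * x ^ 2 - 2 * MB * r0 * x - MB) * (2 * (x ^ 2 * r0 + x) * (2 * x * r0 + 1)) =
        (x ^ 2 * r0 + x) * (-2 * r0 ^ 2 * x ^ 3 + 6 * MB * r0 ^ 2 * x ^ 2 + 6 * MB * r0 * x + 2 * MB) := by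
      ring
    rw [key]
    have hN : 0 < -2 * r0 ^ 2 * x ^ 3 + 6 * MB * r0 ^ 2 * x ^ 2 + 6 * MB * r0 * x + 2 * MB := by
      nlinarith [mul_pos (mul_pos hr0 hr0) (mul_pos (mul_pos hx0 hx0) (sub_pos.mpr hxMB)),
        mul_pos hMB (mul_pos (mul_pos hr0 hr0) (mul_pos hx0 hx0)),
        mul_pos hMB (mul_pos hr0 hx0)]
    positivity
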